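/- If every aggregation operator occurring in the clauses of P is Scott-continuous, then the immediate-consequence operator T_P is Scott-continuous on interpretations: for every nonempty directed set D of interpretations (directed in the pointwise order), T_P(⨆ D) = ⨆_{I ∈ D} T_P(I). -/

import Mathlib

/-- A fuzzy clause: a head atom, a finite tuple of body atoms, and an
aggregation operator over truth values. -/
structure FuzzyClause (A : Type*) (L : Type*) where
  n : ℕ
  head : A
  body : Fin n → A
  agg : (Fin n → L) → L

/-- A fuzzy program: a set of facts and a set of clauses whose aggregation
operators are monotone (w.r.t. the pointwise order on argument tuples). -/
structure FuzzyProgram (A : Type*) (L : Type*) [CompleteLattice L] where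
  facts : Set (A × L)
  clauses : Set (FuzzyClause A L)
  agg_mono : ∀ c ∈ clauses, Monotone c.agg

variable {A : Type*} {L : Type*} [CompleteLattice L]

/-- `I` is a model of `P` with default assignment `d`. -/
def IsModel (d : A → L) (P : FuzzyProgram A L) (I : A → L) : Prop :=
  (∀ a, d a ≤ I a) ∧
  (∀ p ∈ P.facts, p.2 ≤ I p.1) ∧
  (∀ c ∈ P.clauses, c.agg (fun i => I (c.body i)) ≤ I c.head)

/-- The immediate-consequence operator `T_P`. -/
def TP (d : A → L) (P : FuzzyProgram A L) (I : A → L) : A → L :=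
  fun a =>
    d a ⊔ sSup {v | (a, v) ∈ P.facts} ⊔
      sSup {w | ∃ c ∈ P.clauses, c.head = a ∧ w = c.agg (fun i => I (c.body i))}

/-- An aggregation operator is Scott-continuous if it preserves suprema of
nonempty directed sets of argument tuples (pointwise order). -/
def ScottContinuous' {n : ℕ} (F : (Fin n → L) → L) : Prop :=
  ∀ S : Set (Fin n → L), S.Nonempty → DirectedOn (· ≤ ·) S →
    F (sSup S) = ⨆ x ∈ S, F x

/-- If every aggregation operator occurring in the clauses of `P` is
Scott-continuous, then `T_P` is Scott-continuous on interpretations. -/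
theorem TP_scott_continuous (d : A → L) (P : FuzzyProgram A L)
    (hsc : ∀ c ∈ P.clauses, ScottContinuous' c.agg) :
    ∀ D : Set (A → L), D.Nonempty → DirectedOn (· ≤ ·) D →
      TP d P (sSup D) = ⨆ I ∈ D, TP d P I := by
  intro D hne hdir
  have hmono : Monotone (TP d P) := by
    intro I J hIJ a
    refine sup_le_sup le_rfl (sSup_le_sSup_of_isCofinalFor ?_)
    rintro w ⟨c, hc, hch, rfl⟩
    exact ⟨c.agg (fun i => J (c.body i)), ⟨c, hc, hch, rfl⟩,
      P.agg_mono c hc (fun i => hIJ (c.body i))⟩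
  have hagg : ∀ c ∈ P.clauses,
      c.agg (fun i => sSup D (c.body i)) = ⨆ I ∈ D, c.agg (fun i => I (c.body i)) := by
    intro c hc
    set S : Set (Fin c.n → L) := (fun I => fun i => I (c.body i)) '' D with hS
    have hSne : S.Nonempty := hne.image _
    have hSdir : DirectedOn (· ≤ ·) S := by
      rintro _ ⟨I, hI, rfl⟩ _ ⟨J, hJ, rfl⟩
      obtain ⟨K, hK, hIK, hJK⟩ := hdir I hI J hJ
      exact ⟨_, ⟨K, hK, rfl⟩, fun i => hIK (c.body i), fun i => hJK (c.body i)⟩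
    have hsup : sSup S = fun i => sSup D (c.body i) := by
      have h1 : sSup S = ⨆ I ∈ D, (fun i => I (c.body i)) := by rw [hS, sSup_image]
      funext i
      rw [h1, sSup_apply]
      simp only [iSup_apply]
      exact (iSup_subtype'' D fun I => I (c.body i)).symm
    calc c.agg (fun i => sSup D (c.body i)) = c.agg (sSup S) := by rw [hsup]
      _ = ⨆ x ∈ S, c.agg x := hsc c hc S hSne hSdir
      _ = ⨆ I ∈ D, c.agg (fun i => I (c.body i)) := by rw [hS, iSup_image]
  apply le_antisymm
  · intro a
    show d a ⊔ _ ⊔ _ ≤ _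
    obtain ⟨I₀, hI₀⟩ := hne
    have h1 : d a ⊔ sSup {v | (a, v) ∈ P.facts} ≤ (⨆ I ∈ D, TP d P I) a := by
      refine le_trans (le_sup_left : _ ≤ TP d P I₀ a) ?_
      rw [iSup_apply]
      exact le_iSup_of_le I₀ (by rw [iSup_apply]; exact le_iSup_of_le hI₀ le_rfl)
    refine sup_le h1 (sSup_le ?_)
    rintro w ⟨c, hc, hch, rfl⟩
    rw [hagg c hc]
    refine iSup_le fun I => iSup_le fun hI => ?_
    have : c.agg (fun i => I (c.body i)) ≤ TP d P I a := by
      refine le_trans (le_sSup ?_) le_sup_right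
      exact ⟨c, hc, hch, rfl⟩
    refine le_trans this ?_
    rw [iSup_apply]
    exact le_iSup_of_le I (by rw [iSup_apply]; exact le_iSup_of_le hI le_rfl)
  · refine iSup_le fun I => iSup_le fun hI => hmono (le_sSup hI)
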